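/- The star graph G_k admits a simple elimination ordering, hence is strongly chordal: there exists a linear order v_1,...,v_n of its vertices such that each v_i is simple in the subgraph induced by {v_i,...,v_n}, where a vertex v is simple if the closed neighborhoods of the members of its closed neighborhood are linearly ordered by inclusion. -/

import Mathlib

open SimpleGraph

/-- Vertices of the star graph G_k: the root `r`, the clique vertices
`b i` and `d i` for i < 2^k, and, for every dyadic interval of {0,...,2^k-1}
(given by a level `t ≤ k` and an index `j < 2^t`), a vertex `c t j`. -/
inductive SVtx (k : ℕ) : Type
  | r : SVtx k
  | b : Fin (2 ^ k) → SVtx k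
  | d : Fin (2 ^ k) → SVtx k
  | c : (t : Fin (k + 1)) → Fin (2 ^ (t : ℕ)) → SVtx k

/-- r is adjacent to all b's; the b's and d's together form a clique;
`c t j` is adjacent exactly to the b_i and d_i with i in the dyadic interval
{ i | i / 2^(k-t) = j }. -/
def starRel (k : ℕ) : SVtx k → SVtx k → Prop
  | .r, .b _ => True
  | .b _, .b _ => True
  | .d _, .d _ => True
  | .b _, .d _ => True
  | .c t j, .b i => (i : ℕ) / 2 ^ (k - (t : ℕ)) = (j : ℕ)
  | .c t j, .d i => (i : ℕ) / 2 ^ (k - (t : ℕ)) = (j : ℕ)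
  | _, _ => False

def starG (k : ℕ) : SimpleGraph (SVtx k) := SimpleGraph.fromRel (starRel k)
def srank (k : ℕ) : SVtx k → ℕ
  | .r => 2 ^ (k+1) - 1
  | .b i => 2 ^ (k+1) + i
  | .d i => 2 ^ (k+1) + 2 ^ k + i
  | .c t j => 2 ^ (k+1) - 2 ^ ((t:ℕ)+1) + j

lemma adj_iff {k : ℕ} {x y : SVtx k} :
    (starG k).Adj x y ↔ x ≠ y ∧ (starRel k x y ∨ starRel k y x) := Iff.rfl

lemma crank_lt {k : ℕ} (t : Fin (k+1)) (j : Fin (2^(t:ℕ))) :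
    2 ^ (k+1) - 2 ^ ((t:ℕ)+1) + (j:ℕ) < 2 ^ (k+1) - 1 := by
  have h1 : 2 ^ ((t:ℕ)+1) ≤ 2 ^ (k+1) :=
    Nat.pow_le_pow_right (by norm_num) (by have := t.isLt; omega)
  have h2 : (j:ℕ) < 2 ^ (t:ℕ) := j.isLt
  have h3 : 2 ^ ((t:ℕ)+1) = 2 * 2 ^ (t:ℕ) := by rw [pow_succ]; ring
  omega

lemma crank_le_crank {k : ℕ} (t s : Fin (k+1)) (j : Fin (2^(t:ℕ))) (j' : Fin (2^(s:ℕ)))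
    (h : srank k (.c t j) ≤ srank k (.c s j')) : (s:ℕ) ≤ (t:ℕ) := by
  simp only [srank] at h
  by_contra hc
  push_neg at hc
  have h1 : 2 ^ ((t:ℕ)+1) ≤ 2 ^ (s:ℕ) := Nat.pow_le_pow_right (by norm_num) (by omega)
  have h2 : 2 ^ ((s:ℕ)+1) = 2 * 2 ^ (s:ℕ) := by rw [pow_succ]; ring
  have h3 : 2 ^ ((s:ℕ)+1) ≤ 2 ^ (k+1) :=
    Nat.pow_le_pow_right (by norm_num) (by have := s.isLt; omega)
  have h4 : (j':ℕ) < 2 ^ (s:ℕ) := j'.isLt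
  omega

lemma key_div (k t s i i' : ℕ) (hs : s ≤ t) (ht : t ≤ k)
    (h : i / 2^(k-t) = i' / 2^(k-t)) : i / 2^(k-s) = i' / 2^(k-s) := by
  have hpow : 2^(k-s) = 2^(k-t) * 2^(t-s) := by rw [← pow_add]; congr 1; omega
  rw [hpow, ← Nat.div_div_eq_div_mul, ← Nat.div_div_eq_div_mul, h]

lemma srank_inj (k : ℕ) : Function.Injective (srank k) := by
  have hA : (1:ℕ) ≤ 2 ^ (k+1) := Nat.one_le_two_pow
  intro x y h
  cases x with
  | r =>
    cases y with
    | r => rfl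
    | b m => exfalso; simp only [srank] at h; have := m.isLt; omega
    | d m => exfalso; simp only [srank] at h; have := m.isLt; omega
    | c t j => exfalso; simp only [srank] at h; have := crank_lt t j; omega
  | b i =>
    cases y with
    | r => exfalso; simp only [srank] at h; have := i.isLt; omega
    | b m => simp only [srank] at h; congr 1; exact Fin.ext (by omega)
    | d m => exfalso; simp only [srank] at h; have := i.isLt; omega
    | c t j => exfalso; simp only [srank] at h; have := crank_lt t j; omega
  | d i =>
    cases y with
    | r => exfalso; simp only [srank] at h; have := i.isLt; omega
    | b m => exfalso; simp only [srank] at h; have := m.isLt; omega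
    | d m => simp only [srank] at h; congr 1; exact Fin.ext (by omega)
    | c t j => exfalso; simp only [srank] at h; have := crank_lt t j; omega
  | c t j =>
    cases y with
    | r => exfalso; simp only [srank] at h; have := crank_lt t j; omega
    | b m => exfalso; simp only [srank] at h; have := crank_lt t j; omega
    | d m => exfalso; simp only [srank] at h; have := crank_lt t j; omega
    | c t' j' =>
      have h1 := crank_le_crank t t' j j' (le_of_eq h)
      have h2 := crank_le_crank t' t j' j (le_of_eq h.symm)
      have ht : t = t' := Fin.ext (by omega)
      subst ht
      simp only [srank] at h
      have h3 : 2 ^ ((t:ℕ)+1) ≤ 2 ^ (k+1) :=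
        Nat.pow_le_pow_right (by norm_num) (by have := t.isLt; omega)
      congr 1
      exact Fin.ext (by omega)

lemma rank_ge_d {k : ℕ} (i : Fin (2^k)) (z : SVtx k) (h : srank k (.d i) ≤ srank k z) :
    ∃ m : Fin (2^k), z = .d m := by
  cases z with
  | r => exfalso; simp only [srank] at h; have := i.isLt; omega
  | b m => exfalso; simp only [srank] at h; have := m.isLt; omega
  | d m => exact ⟨m, rfl⟩
  | c t j => exfalso; simp only [srank] at h; have := crank_lt t j; omega

lemma rank_ge_b {k : ℕ} (i : Fin (2^k)) (z : SVtx k) (h : srank k (.b i) ≤ srank k z) :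
    (∃ m : Fin (2^k), z = .b m) ∨ (∃ m : Fin (2^k), z = .d m) := by
  cases z with
  | r => exfalso; simp only [srank] at h; have := i.isLt; omega
  | b m => exact Or.inl ⟨m, rfl⟩
  | d m => exact Or.inr ⟨m, rfl⟩
  | c t j => exfalso; simp only [srank] at h; have := crank_lt t j; omega

lemma rank_ge_r {k : ℕ} (z : SVtx k) (h : srank k .r ≤ srank k z) :
    z = .r ∨ (∃ m : Fin (2^k), z = .b m) ∨ (∃ m : Fin (2^k), z = .d m) := by
  cases z with
  | r => exact Or.inl rfl
  | b m => exact Or.inr (Or.inl ⟨m, rfl⟩)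
  | d m => exact Or.inr (Or.inr ⟨m, rfl⟩)
  | c t j => exfalso; simp only [srank] at h; have := crank_lt t j; omega

lemma mem_clique {k : ℕ} (z w : SVtx k)
    (hz : (∃ m, z = SVtx.b m) ∨ (∃ m, z = SVtx.d m))
    (hw : (∃ m, w = SVtx.b m) ∨ (∃ m, w = SVtx.d m)) :
    z = w ∨ (starG k).Adj w z := by
  by_cases h : z = w
  · exact Or.inl h
  · refine Or.inr (adj_iff.mpr ⟨Ne.symm h, ?_⟩)
    rcases hz with ⟨m, rfl⟩ | ⟨m, rfl⟩ <;> rcases hw with ⟨m', rfl⟩ | ⟨m', rfl⟩ <;>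
      simp [starRel]

lemma nbr_r {k : ℕ} (u : SVtx k) (hu : u = SVtx.r ∨ (starG k).Adj SVtx.r u) :
    u = .r ∨ ∃ m : Fin (2^k), u = .b m := by
  rcases hu with rfl | h
  · exact Or.inl rfl
  · obtain ⟨hne, hrel⟩ := adj_iff.mp h
    cases u with
    | r => exact Or.inl rfl
    | b m => exact Or.inr ⟨m, rfl⟩
    | d m => simp [starRel] at hrel
    | c t j => simp [starRel] at hrel

lemma nbr_c {k : ℕ} (t : Fin (k+1)) (j : Fin (2^(t:ℕ))) (u : SVtx k)
    (hu : u = SVtx.c t j ∨ (starG k).Adj (SVtx.c t j) u) :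
    u = .c t j ∨ (∃ m : Fin (2^k), u = .b m ∧ (m:ℕ)/2^(k-(t:ℕ)) = (j:ℕ))
      ∨ (∃ m : Fin (2^k), u = .d m ∧ (m:ℕ)/2^(k-(t:ℕ)) = (j:ℕ)) := by
  rcases hu with rfl | h
  · exact Or.inl rfl
  · obtain ⟨hne, hrel⟩ := adj_iff.mp h
    cases u with
    | r => simp [starRel] at hrel
    | b m => simp only [starRel] at hrel
             exact Or.inr (Or.inl ⟨m, rfl, by simpa [starRel] using hrel⟩)
    | d m => exact Or.inr (Or.inr ⟨m, rfl, by simpa [starRel] using hrel⟩)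
    | c s j' => simp [starRel] at hrel

lemma mem_r_nbhd {k : ℕ} (z : SVtx k) (m' : Fin (2^k))
    (hz : z = SVtx.r ∨ (∃ m, z = SVtx.b m) ∨ (∃ m, z = SVtx.d m)) :
    z = SVtx.b m' ∨ (starG k).Adj (SVtx.b m') z := by
  rcases hz with rfl | ⟨m, rfl⟩ | ⟨m, rfl⟩
  · exact Or.inr (adj_iff.mpr ⟨by simp, Or.inr (by simp [starRel])⟩)
  · exact mem_clique _ _ (Or.inl ⟨m, rfl⟩) (Or.inl ⟨m', rfl⟩)
  · exact mem_clique _ _ (Or.inr ⟨m, rfl⟩) (Or.inl ⟨m', rfl⟩)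

/-- In the `v = c t j` case: `N_v[c t j] ⊆ N_v[d i']` for `i'` in the interval. -/
lemma incl_cd {k : ℕ} (t : Fin (k+1)) (j : Fin (2^(t:ℕ))) (i' : Fin (2^k))
    (hi' : (i':ℕ)/2^(k-(t:ℕ)) = (j:ℕ)) :
    {z : SVtx k | srank k (.c t j) ≤ srank k z ∧ (z = .c t j ∨ (starG k).Adj (.c t j) z)} ⊆
    {z : SVtx k | srank k (.c t j) ≤ srank k z ∧ (z = .d i' ∨ (starG k).Adj (.d i') z)} := by
  rintro z ⟨hz1, hz2⟩
  refine ⟨hz1, ?_⟩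
  rcases nbr_c t j z hz2 with rfl | ⟨m, rfl, hm⟩ | ⟨m, rfl, hm⟩
  · refine Or.inr (adj_iff.mpr ⟨by simp, Or.inr ?_⟩)
    show (i':ℕ)/2^(k-(t:ℕ)) = (j:ℕ)
    exact hi'
  · exact mem_clique _ _ (Or.inl ⟨m, rfl⟩) (Or.inr ⟨i', rfl⟩)
  · exact mem_clique _ _ (Or.inr ⟨m, rfl⟩) (Or.inr ⟨i', rfl⟩)

/-- In the `v = c t j` case: `N_v[d i] ⊆ N_v[b i']` for `i, i'` in the interval. -/
lemma incl_db {k : ℕ} (t : Fin (k+1)) (j : Fin (2^(t:ℕ))) (i i' : Fin (2^k))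
    (hi : (i:ℕ)/2^(k-(t:ℕ)) = (j:ℕ)) (hi' : (i':ℕ)/2^(k-(t:ℕ)) = (j:ℕ)) :
    {z : SVtx k | srank k (.c t j) ≤ srank k z ∧ (z = .d i ∨ (starG k).Adj (.d i) z)} ⊆
    {z : SVtx k | srank k (.c t j) ≤ srank k z ∧ (z = .b i' ∨ (starG k).Adj (.b i') z)} := by
  rintro z ⟨hz1, hz2⟩
  refine ⟨hz1, ?_⟩
  cases z with
  | r =>
    exfalso
    rcases hz2 with h | h
    · exact nomatch h
    · obtain ⟨_, hrel⟩ := adj_iff.mp h; simp [starRel] at hrel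
  | b m => exact mem_clique _ _ (Or.inl ⟨m, rfl⟩) (Or.inl ⟨i', rfl⟩)
  | d m => exact mem_clique _ _ (Or.inr ⟨m, rfl⟩) (Or.inl ⟨i', rfl⟩)
  | c s j' =>
    have hrel : (i:ℕ)/2^(k-(s:ℕ)) = (j':ℕ) := by
      rcases hz2 with h | h
      · exact absurd h (by simp)
      · obtain ⟨_, hr⟩ := adj_iff.mp h; simpa [starRel] using hr
    have hs : (s:ℕ) ≤ (t:ℕ) := crank_le_crank t s j j' hz1
    refine Or.inr (adj_iff.mpr ⟨by simp, Or.inr ?_⟩)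
    show (i':ℕ)/2^(k-(s:ℕ)) = (j':ℕ)
    rw [← hrel]
    exact key_div k (t:ℕ) (s:ℕ) (i':ℕ) (i:ℕ) hs (by have := t.isLt; omega)
      (hi'.trans hi.symm)

/-- In the `v = c t j` case: `N_v[d i] ⊆ N_v[d i']` for `i, i'` in the interval. -/
lemma incl_dd {k : ℕ} (t : Fin (k+1)) (j : Fin (2^(t:ℕ))) (i i' : Fin (2^k))
    (hi : (i:ℕ)/2^(k-(t:ℕ)) = (j:ℕ)) (hi' : (i':ℕ)/2^(k-(t:ℕ)) = (j:ℕ)) :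
    {z : SVtx k | srank k (.c t j) ≤ srank k z ∧ (z = .d i ∨ (starG k).Adj (.d i) z)} ⊆
    {z : SVtx k | srank k (.c t j) ≤ srank k z ∧ (z = .d i' ∨ (starG k).Adj (.d i') z)} := by
  rintro z ⟨hz1, hz2⟩
  refine ⟨hz1, ?_⟩
  cases z with
  | r =>
    exfalso
    rcases hz2 with h | h
    · exact nomatch h
    · obtain ⟨_, hrel⟩ := adj_iff.mp h; simp [starRel] at hrel
  | b m => exact mem_clique _ _ (Or.inl ⟨m, rfl⟩) (Or.inr ⟨i', rfl⟩)
  | d m => exact mem_clique _ _ (Or.inr ⟨m, rfl⟩) (Or.inr ⟨i', rfl⟩)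
  | c s j' =>
    have hrel : (i:ℕ)/2^(k-(s:ℕ)) = (j':ℕ) := by
      rcases hz2 with h | h
      · exact absurd h (by simp)
      · obtain ⟨_, hr⟩ := adj_iff.mp h; simpa [starRel] using hr
    have hs : (s:ℕ) ≤ (t:ℕ) := crank_le_crank t s j j' hz1
    refine Or.inr (adj_iff.mpr ⟨by simp, Or.inr ?_⟩)
    show (i':ℕ)/2^(k-(s:ℕ)) = (j':ℕ)
    rw [← hrel]
    exact key_div k (t:ℕ) (s:ℕ) (i':ℕ) (i:ℕ) hs (by have := t.isLt; omega)
      (hi'.trans hi.symm)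

/-- In the `v = c t j` case: `N_v[b i] ⊆ N_v[b i']` for `i, i'` in the interval. -/
lemma incl_bb {k : ℕ} (t : Fin (k+1)) (j : Fin (2^(t:ℕ))) (i i' : Fin (2^k))
    (hi : (i:ℕ)/2^(k-(t:ℕ)) = (j:ℕ)) (hi' : (i':ℕ)/2^(k-(t:ℕ)) = (j:ℕ)) :
    {z : SVtx k | srank k (.c t j) ≤ srank k z ∧ (z = .b i ∨ (starG k).Adj (.b i) z)} ⊆
    {z : SVtx k | srank k (.c t j) ≤ srank k z ∧ (z = .b i' ∨ (starG k).Adj (.b i') z)} := by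
  rintro z ⟨hz1, hz2⟩
  refine ⟨hz1, ?_⟩
  cases z with
  | r => exact Or.inr (adj_iff.mpr ⟨by simp, Or.inr (by simp [starRel])⟩)
  | b m => exact mem_clique _ _ (Or.inl ⟨m, rfl⟩) (Or.inl ⟨i', rfl⟩)
  | d m => exact mem_clique _ _ (Or.inr ⟨m, rfl⟩) (Or.inl ⟨i', rfl⟩)
  | c s j' =>
    have hrel : (i:ℕ)/2^(k-(s:ℕ)) = (j':ℕ) := by
      rcases hz2 with h | h
      · exact absurd h (by simp)
      · obtain ⟨_, hr⟩ := adj_iff.mp h; simpa [starRel] using hr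
    have hs : (s:ℕ) ≤ (t:ℕ) := crank_le_crank t s j j' hz1
    refine Or.inr (adj_iff.mpr ⟨by simp, Or.inr ?_⟩)
    show (i':ℕ)/2^(k-(s:ℕ)) = (j':ℕ)
    rw [← hrel]
    exact key_div k (t:ℕ) (s:ℕ) (i':ℕ) (i:ℕ) hs (by have := t.isLt; omega)
      (hi'.trans hi.symm)
/-- The star graph G_k admits a simple elimination ordering (hence is strongly
chordal): there is an ordering (injective rank function f) of the vertices such
that each vertex v is simple in the subgraph induced by the vertices of rank ≥ f v:
the closed neighborhoods (within that induced subgraph) of the members of the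
closed neighborhood of v are linearly ordered by inclusion. -/
theorem stmt10 :
    ∀ k : ℕ, ∃ f : SVtx k → ℕ, Function.Injective f ∧
      ∀ v u w : SVtx k,
        f v ≤ f u → (u = v ∨ (starG k).Adj v u) →
        f v ≤ f w → (w = v ∨ (starG k).Adj v w) →
        ({z : SVtx k | f v ≤ f z ∧ (z = u ∨ (starG k).Adj u z)} ⊆
           {z : SVtx k | f v ≤ f z ∧ (z = w ∨ (starG k).Adj w z)} ∨
         {z : SVtx k | f v ≤ f z ∧ (z = w ∨ (starG k).Adj w z)} ⊆
           {z : SVtx k | f v ≤ f z ∧ (z = u ∨ (starG k).Adj u z)}) := by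
  intro k
  refine ⟨srank k, srank_inj k, ?_⟩
  intro v u w hvu hu hvw hw
  cases v with
  | r =>
    rcases nbr_r u hu with rfl | ⟨m, rfl⟩
    · left
      rintro z ⟨hz1, hz2⟩
      rcases nbr_r w hw with rfl | ⟨m', rfl⟩
      · exact ⟨hz1, hz2⟩
      · exact ⟨hz1, mem_r_nbhd z m' (rank_ge_r z hz1)⟩
    · rcases nbr_r w hw with rfl | ⟨m', rfl⟩
      · right
        rintro z ⟨hz1, hz2⟩
        exact ⟨hz1, mem_r_nbhd z m ((nbr_r z hz2).imp id Or.inl)⟩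
      · left
        rintro z ⟨hz1, hz2⟩
        exact ⟨hz1, mem_r_nbhd z m' (rank_ge_r z hz1)⟩
  | b i =>
    left
    rintro z ⟨hz1, hz2⟩
    exact ⟨hz1, mem_clique z w (rank_ge_b i z hz1) (rank_ge_b i w hvw)⟩
  | d i =>
    left
    rintro z ⟨hz1, hz2⟩
    obtain ⟨m, rfl⟩ := rank_ge_d i z hz1
    obtain ⟨m', rfl⟩ := rank_ge_d i w hvw
    exact ⟨hz1, mem_clique _ _ (Or.inr ⟨m, rfl⟩) (Or.inr ⟨m', rfl⟩)⟩
  | c t j =>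
    rcases nbr_c t j u hu with rfl | ⟨m, rfl, hm⟩ | ⟨m, rfl, hm⟩ <;>
      rcases nbr_c t j w hw with rfl | ⟨m', rfl, hm'⟩ | ⟨m', rfl, hm'⟩
    · left; exact fun z hz => hz
    · left; exact ((incl_cd t j m' hm').trans (incl_db t j m' m' hm' hm'))
    · left; exact incl_cd t j m' hm'
    · right; exact ((incl_cd t j m hm).trans (incl_db t j m m hm hm))
    · left; exact incl_bb t j m m' hm hm'
    · right; exact incl_db t j m' m hm' hm
    · right; exact incl_cd t j m hm
    · left; exact incl_db t j m m' hm hm'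
    · left; exact incl_dd t j m m' hm hm'
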